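/- Let X be a paracompact Hausdorff space and (U_α)_{α∈κ} an open cover of X. Then there exists a locally finite open refinement V = ⋃_{i∈ℕ} V_i covering X, where each V_i = (V_{i,α})_{α∈κ} is a discrete family of open sets with V_{i,α} ⊆ U_α for all α ∈ κ. -/

import Mathlib

set_option linter.unusedSectionVars false

open Set Function

namespace StoneAux

variable {X : Type*} [TopologicalSpace X] {κ : Type*}

/-- A "good distance": pseudometric-like function continuous in the second variable. -/
structure IsGoodDist (d : X → X → ℝ) : Prop where
  self : ∀ x, d x x = 0
  symm : ∀ x y, d x y = d y x
  tri : ∀ x y z, d x z ≤ d x y + d y z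
  cont : ∀ x, Continuous fun y => d x y

noncomputable def ρ (n : ℕ) : ℝ := (1/2 : ℝ) ^ n

lemma ρ_pos (n : ℕ) : 0 < ρ n := by unfold ρ; positivity

lemma ρ_anti {m n : ℕ} (h : m ≤ n) : ρ n ≤ ρ m := by
  apply pow_le_pow_of_le_one <;> norm_num [h]

lemma ρ_succ (n : ℕ) : ρ (n+1) = ρ n / 2 := by
  simp [ρ, pow_succ]; ring

variable (d : X → X → ℝ) (O : κ → Set X) (sel : X → κ)

def ball (x : X) (r : ℝ) : Set X := {y | d x y < r}

def center (n : ℕ) (P : Set X) (a : κ) : Set X :=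
  {x | sel x = a ∧ x ∉ P ∧ ∀ y, d x y < 3 * ρ n → y ∈ O a}

def Dstep (n : ℕ) (P : Set X) (a : κ) : Set X :=
  ⋃ x ∈ center d O sel n P a, ball d x (ρ n)

def prevSet : ℕ → Set X
  | 0 => ∅
  | n+1 => prevSet n ∪ ⋃ a, Dstep d O sel n (prevSet n) a

def Dfam (n : ℕ) (a : κ) : Set X := Dstep d O sel n (prevSet d O sel n) a

lemma mem_prevSet_iff {x : X} {n : ℕ} :
    x ∈ prevSet d O sel n ↔ ∃ m < n, ∃ a, x ∈ Dfam d O sel m a := by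
  induction n with
  | zero => simp [prevSet]
  | succ n ih =>
    simp only [prevSet, Set.mem_union, ih, Set.mem_iUnion]
    constructor
    · rintro (⟨m, hm, a, h⟩ | ⟨a, h⟩)
      · exact ⟨m, Nat.lt_succ_of_lt hm, a, h⟩
      · exact ⟨n, Nat.lt_succ_self n, a, h⟩
    · rintro ⟨m, hm, a, h⟩
      rcases Nat.lt_succ_iff_lt_or_eq.1 hm with hm | rfl
      · exact Or.inl ⟨m, hm, a, h⟩
      · exact Or.inr ⟨a, h⟩

variable {d O sel}

lemma isOpen_ball (hd : IsGoodDist d) (x : X) (r : ℝ) : IsOpen (ball d x r) :=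
  isOpen_lt (hd.cont x) continuous_const

lemma mem_ball_self (hd : IsGoodDist d) (x : X) {r : ℝ} (hr : 0 < r) :
    x ∈ ball d x r := by simp [ball, hd.self, hr]

lemma isOpen_Dfam (hd : IsGoodDist d) (n : ℕ) (a : κ) : IsOpen (Dfam d O sel n a) :=
  isOpen_biUnion fun x _ => isOpen_ball hd x _

lemma Dfam_subset (n : ℕ) (a : κ) : Dfam d O sel n a ⊆ O a := by
  rintro y hy
  simp only [Dfam, Dstep, Set.mem_iUnion] at hy
  obtain ⟨x, hx, hxy⟩ := hy
  exact hx.2.2 y (lt_of_lt_of_le hxy (by nlinarith [ρ_pos n]))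

lemma Dfam_cover (hd : IsGoodDist d)
    (hO : ∀ a x, x ∈ O a → ∃ ε > 0, ∀ y, d x y < ε → y ∈ O a)
    (hsel : ∀ x, x ∈ O (sel x)) (z : X) :
    ∃ n a, z ∈ Dfam d O sel n a := by
  obtain ⟨ε, hε, hball⟩ := hO (sel z) z (hsel z)
  obtain ⟨n, hn⟩ : ∃ n : ℕ, (1/2 : ℝ) ^ n < ε / 3 :=
    exists_pow_lt_of_lt_one (by linarith) (by norm_num)
  by_cases hz : z ∈ prevSet d O sel n
  · obtain ⟨m, _, a, h⟩ := (mem_prevSet_iff d O sel).1 hz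
    exact ⟨m, a, h⟩
  · refine ⟨n, sel z, ?_⟩
    have hc : z ∈ center d O sel n (prevSet d O sel n) (sel z) :=
      ⟨rfl, hz, fun y hy => hball y (by simp only [ρ] at hy ⊢; linarith)⟩
    exact Set.mem_biUnion hc (mem_ball_self hd z (ρ_pos n))

lemma Dfam_sep (hd : IsGoodDist d)
    (hmin : ∀ x b, x ∈ O b → b ≠ sel x → ¬ WellOrderingRel b (sel x))
    {n : ℕ} {a b : κ} (hab : a ≠ b) {p q : X}
    (hp : p ∈ Dfam d O sel n a) (hq : q ∈ Dfam d O sel n b) :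
    ρ n ≤ d p q := by
  simp only [Dfam, Dstep, Set.mem_iUnion] at hp hq
  obtain ⟨x, hx, hxp⟩ := hp
  obtain ⟨y, hy, hyq⟩ := hq
  -- centers are 3ρn-separated
  have hxy : ¬ d x y < 3 * ρ n := by
    intro h
    have hyOa : y ∈ O a := hx.2.2 y h
    have hxOb : x ∈ O b := hy.2.2 x (by rwa [hd.symm])
    have h1 : ¬ WellOrderingRel a (sel y) := hmin y a hyOa (hy.1 ▸ hab)
    have h2 : ¬ WellOrderingRel b (sel x) := hmin x b hxOb (hx.1 ▸ hab.symm)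
    rw [hx.1] at h2; rw [hy.1] at h1
    rcases trichotomous_of WellOrderingRel a b with h | h | h
    · exact h1 h
    · exact hab h
    · exact h2 h
  push_neg at hxy
  have t1 : d x y ≤ d x p + d p q + d q y := by
    have := hd.tri x p y
    have := hd.tri p q y
    linarith
  rw [hd.symm q y] at t1
  simp only [ball, Set.mem_setOf_eq] at hxp hyq
  linarith

lemma Dfam_closure_disjoint (hd : IsGoodDist d)
    (hmin : ∀ x b, x ∈ O b → b ≠ sel x → ¬ WellOrderingRel b (sel x))
    (n : ℕ) : Pairwise (Disjoint on fun a => closure (Dfam d O sel n a)) := by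
  intro a b hab
  simp only [Function.onFun]
  rw [Set.disjoint_left]
  intro z hza hzb
  have hball : ∀ A : Set X, z ∈ closure A → ∃ p ∈ A, d z p < ρ n / 2 := by
    intro A hz
    have := (isOpen_ball hd z (ρ n / 2)).mem_nhds (mem_ball_self hd z (by linarith [ρ_pos n]))
    obtain ⟨p, hp1, hp2⟩ := mem_closure_iff_nhds.1 hz _ this
    exact ⟨p, hp2, hp1⟩
  obtain ⟨p, hp, hzp⟩ := hball _ hza
  obtain ⟨q, hq, hzq⟩ := hball _ hzb
  have hsep := Dfam_sep hd hmin hab hp hq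
  have : d p q ≤ d p z + d z q := hd.tri p z q
  rw [hd.symm p z] at this
  linarith

lemma Dfam_locallyFinite (hd : IsGoodDist d)
    (hO : ∀ a x, x ∈ O a → ∃ ε > 0, ∀ y, d x y < ε → y ∈ O a)
    (hsel : ∀ x, x ∈ O (sel x))
    (hmin : ∀ x b, x ∈ O b → b ≠ sel x → ¬ WellOrderingRel b (sel x)) :
    LocallyFinite (fun p : ℕ × κ => Dfam d O sel p.1 p.2) := by
  intro z
  obtain ⟨n, a, hz⟩ := Dfam_cover hd hO hsel z
  -- find j with ball z (ρ j) ⊆ Dfam n a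
  simp only [Dfam, Dstep, Set.mem_iUnion] at hz
  obtain ⟨x, hx, hxz⟩ := hz
  simp only [ball, Set.mem_setOf_eq] at hxz
  obtain ⟨j, hj⟩ : ∃ j : ℕ, ρ j < ρ n - d x z := by
    obtain ⟨j, hj⟩ := exists_pow_lt_of_lt_one (sub_pos.2 hxz) (by norm_num : (1/2:ℝ) < 1)
    exact ⟨j, hj⟩
  have hjsub : ball d z (ρ j) ⊆ Dfam d O sel n a := by
    intro w hw
    simp only [ball, Set.mem_setOf_eq] at hw
    have : d x w ≤ d x z + d z w := hd.tri x z w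
    have hxw : d x w < ρ n := by linarith
    exact Set.mem_biUnion hx hxw
  set M := max n j with hM
  refine ⟨ball d z (ρ (M+1)),
    (isOpen_ball hd z _).mem_nhds (mem_ball_self hd z (ρ_pos _)), ?_⟩
  have key_high : ∀ m, M < m → ∀ b, Dfam d O sel m b ∩ ball d z (ρ (M+1)) = ∅ := by
    intro m hm b
    rw [Set.eq_empty_iff_forall_notMem]
    rintro q ⟨hq, hqz⟩
    simp only [Dfam, Dstep, Set.mem_iUnion] at hq
    obtain ⟨y, hy, hyq⟩ := hq
    -- y is not in prevSet m, in particular not in Dfam n a (n ≤ M < m)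
    have hyn : y ∉ Dfam d O sel n a := fun h =>
      hy.2.1 ((mem_prevSet_iff d O sel).2 ⟨n, lt_of_le_of_lt (le_max_left n j) hm, a, h⟩)
    have hzy : ρ j ≤ d z y := by
      by_contra h
      push_neg at h
      exact hyn (hjsub h)
    simp only [ball, Set.mem_setOf_eq] at hyq hqz
    have t : d z y ≤ d z q + d q y := hd.tri z q y
    rw [hd.symm q y] at t
    have h1 : ρ (M+1) ≤ ρ (j+1) := ρ_anti (by omega)
    have h2 : ρ m ≤ ρ (M+1) := ρ_anti (by omega)
    have h3 : ρ (j+1) = ρ j / 2 := ρ_succ j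
    linarith
  have key_low : ∀ m, {b : κ | (Dfam d O sel m b ∩ ball d z (ρ (M+1))).Nonempty}.Subsingleton := by
    intro m b₁ hb₁ b₂ hb₂
    by_contra hne
    obtain ⟨p, hp, hpz⟩ := hb₁
    obtain ⟨q, hq, hqz⟩ := hb₂
    have hsep := Dfam_sep hd hmin hne hp hq
    simp only [ball, Set.mem_setOf_eq] at hpz hqz
    -- m ≤ M here, since otherwise both empty
    have hm : m ≤ M := by
      by_contra h
      push_neg at h
      have := key_high m h b₁
      rw [Set.eq_empty_iff_forall_notMem] at this
      exact this p ⟨hp, hpz⟩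
    have t : d p q ≤ d p z + d z q := hd.tri p z q
    rw [hd.symm p z] at t
    have h1 : ρ (M+1) ≤ ρ (m+1) := ρ_anti (by omega)
    have h2 : ρ (m+1) = ρ m / 2 := ρ_succ m
    linarith
  apply Set.Finite.subset ((Set.finite_Iic M).biUnion
    (fun m _ => ((key_low m).finite.image (fun b => ((m, b) : ℕ × κ)))))
  rintro ⟨m, b⟩ hmb
  simp only [Set.mem_setOf_eq] at hmb
  have hm : m ≤ M := by
    by_contra h
    push_neg at h
    have := key_high m h b
    rw [Set.eq_empty_iff_forall_notMem] at this
    obtain ⟨q, hq⟩ := hmb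
    exact this q hq
  simp only [Set.mem_iUnion, Set.mem_image]
  exact ⟨m, hm, b, hmb, rfl⟩

theorem stone_aux (hd : IsGoodDist d)
    (hO : ∀ a x, x ∈ O a → ∃ ε > 0, ∀ y, d x y < ε → y ∈ O a)
    (hcov : ∀ x, ∃ a, x ∈ O a) :
    ∃ V : ℕ → κ → Set X,
      (∀ i a, IsOpen (V i a)) ∧ (∀ i a, V i a ⊆ O a) ∧
      (∀ i, Pairwise (Disjoint on fun a => closure (V i a))) ∧
      LocallyFinite (fun p : ℕ × κ => V p.1 p.2) ∧
      (⋃ i, ⋃ a, V i a) = Set.univ := by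
  have wf : WellFounded (WellOrderingRel : κ → κ → Prop) :=
    (WellOrderingRel.isWellOrder).wf
  set sel : X → κ := fun x => wf.min {a | x ∈ O a} (hcov x) with hsel_def
  have hsel : ∀ x, x ∈ O (sel x) := fun x => wf.min_mem {a | x ∈ O a} (hcov x)
  have hmin : ∀ x b, x ∈ O b → b ≠ sel x → ¬ WellOrderingRel b (sel x) :=
    fun x b hb _ => wf.not_lt_min {a | x ∈ O a} hb
  refine ⟨Dfam d O sel, fun i a => isOpen_Dfam hd i a, fun i a => Dfam_subset i a,
    fun i => Dfam_closure_disjoint hd hmin i, Dfam_locallyFinite hd hO hsel hmin, ?_⟩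
  rw [Set.eq_univ_iff_forall]
  intro z
  obtain ⟨n, a, h⟩ := Dfam_cover hd hO hsel z
  exact Set.mem_iUnion.2 ⟨n, Set.mem_iUnion.2 ⟨a, h⟩⟩


end StoneAux

open StoneAux

theorem stone_sigma_discrete_refinement {X : Type*} [TopologicalSpace X]
    [ParacompactSpace X] [T2Space X] {κ : Type*} (U : κ → Set X)
    (hopen : ∀ a, IsOpen (U a)) (hcov : ⋃ a, U a = Set.univ) :
    ∃ V : ℕ → κ → Set X,
      (∀ i a, IsOpen (V i a)) ∧ (∀ i a, V i a ⊆ U a) ∧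
      (∀ i, Pairwise (Disjoint on fun a => closure (V i a))) ∧
      LocallyFinite (fun p : ℕ × κ => V p.1 p.2) ∧
      (⋃ i, ⋃ a, V i a) = Set.univ := by
  obtain ⟨f, hf⟩ := PartitionOfUnity.exists_isSubordinate isClosed_univ U hopen
    (by rw [hcov])
  -- pointwise finite supports
  have hfin : ∀ x : X, {a : κ | f a x ≠ 0}.Finite := by
    intro x
    simpa [Function.support] using f.locallyFinite.point_finite x
  -- the ℓ¹ pseudodistance
  set d : X → X → ℝ := fun x y => ∑ᶠ a, |f a x - f a y| with hd_def
  have hsupp : ∀ x y : X,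
      (Function.support fun a => |f a x - f a y|) ⊆ {a | f a x ≠ 0} ∪ {a | f a y ≠ 0} := by
    intro x y a ha
    simp only [Function.mem_support, ne_eq, abs_ne_zero, sub_ne_zero] at ha
    by_contra h
    simp only [Set.mem_union, Set.mem_setOf_eq, not_or, not_not] at h
    rw [h.1, h.2] at ha
    exact ha rfl
  have hsupp_fin : ∀ x y : X,
      (Function.support fun a => |f a x - f a y|).Finite := fun x y =>
    Set.Finite.subset ((hfin x).union (hfin y)) (hsupp x y)
  -- d as a finite sum over any large enough finset
  have hd_sum : ∀ (x y : X) (s : Finset κ),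
      {a | f a x ≠ 0} ⊆ ↑s → {a | f a y ≠ 0} ⊆ ↑s →
      d x y = ∑ a ∈ s, |f a x - f a y| := by
    intro x y s hx hy
    exact finsum_eq_finset_sum_of_support_subset _
      (fun a ha => Set.mem_of_subset_of_mem (Set.union_subset hx hy) (hsupp x y ha))
  have hd : IsGoodDist d := by
    constructor
    · intro x; simp [hd_def]
    · intro x y
      simp only [hd_def]
      congr 1; funext a; rw [abs_sub_comm]
    · intro x y z
      set s : Finset κ := ((hfin x).union ((hfin y).union (hfin z))).toFinset with hs
      have hsx : {a | f a x ≠ 0} ⊆ ↑s := by intro a ha; simp [hs]; tauto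
      have hsy : {a | f a y ≠ 0} ⊆ ↑s := by intro a ha; simp [hs]; tauto
      have hsz : {a | f a z ≠ 0} ⊆ ↑s := by intro a ha; simp [hs]; tauto
      rw [hd_sum x z s hsx hsz, hd_sum x y s hsx hsy, hd_sum y z s hsy hsz,
        ← Finset.sum_add_distrib]
      exact Finset.sum_le_sum fun a _ => abs_sub_le (f a x) (f a y) (f a z)
    · intro x
      rw [continuous_iff_continuousAt]
      intro y₀
      obtain ⟨N, hN, hNfin⟩ := f.locallyFinite y₀
      set s : Finset κ := ((hfin x).union hNfin).toFinset with hs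
      have heq : (fun y => d x y) =ᶠ[nhds y₀] fun y => ∑ a ∈ s, |f a x - f a y| := by
        filter_upwards [hN] with y hy
        apply hd_sum x y s
        · intro a ha; simp [hs]; tauto
        · intro a ha
          simp only [Set.mem_setOf_eq] at ha
          simp only [hs, Set.Finite.coe_toFinset, Set.mem_union]
          exact Or.inr ⟨y, ha, hy⟩
      refine ContinuousAt.congr ?_ heq.symm
      exact (continuous_finset_sum s fun a _ =>
        (continuous_const.sub (f a).continuous).abs).continuousAt
  -- the d-open cover
  set O : κ → Set X := fun a => {x | 0 < f a x} with hO_def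
  have hterm_le : ∀ (a : κ) (x y : X), |f a x - f a y| ≤ d x y := by
    intro a x y
    exact single_le_finsum a (hsupp_fin x y) (fun b => abs_nonneg _)
  have hOopen : ∀ a x, x ∈ O a → ∃ ε > 0, ∀ y, d x y < ε → y ∈ O a := by
    intro a x hx
    refine ⟨f a x, hx, fun y hy => ?_⟩
    have := (hterm_le a x y).trans_lt hy
    have := abs_lt.1 this
    simp only [hO_def, Set.mem_setOf_eq]
    linarith
  have hOcov : ∀ x, ∃ a, x ∈ O a := by
    intro x
    by_contra h
    push_neg at h
    have hone := f.sum_eq_one (Set.mem_univ x)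
    have : ∀ a, f a x = 0 := fun a =>
      le_antisymm (not_lt.1 (h a)) (f.nonneg a x)
    rw [finsum_congr this] at hone
    simp at hone
  have hOsub : ∀ a, O a ⊆ U a := by
    intro a x hx
    exact hf a (subset_closure (by simpa [Function.mem_support] using ne_of_gt hx))
  obtain ⟨V, h1, h2, h3, h4, h5⟩ := stone_aux (d := d) (O := O) hd hOopen hOcov
  exact ⟨V, h1, fun i a => (h2 i a).trans (hOsub a), h3, h4, h5⟩
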